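/- arXiv:2502.07410 — 8 statements merged into one kernel-verified Lean document; each statement's English description precedes it below -/
import Mathlib

section
/- Let 0 < α < 1, 0 ≤ ε < 1, λ > 0 and R > 0 be real numbers, and let β be any real number. Define q₀₀ = (1−α)/(1+α(1−α)²), q₁₀ = α·q₀₀, q₂₀ = (α²/(1−α))·q₀₀, q₁₁ = α(1−α)·q₀₀, Diff = (1−α)·q₀₀ + α·q₂₀ + 2(1−α)·q₂₀ + 2·q₁₁, and Profit = (α·q₂₀ + 2(1−α)·q₂₀ + 2α·q₁₁ + (1−ε)(1−α−β)·q₁₁)·(λ·R/Diff). Then Profit > α·λ·R if and only if β < (α − ε(1−α)²)/((1−α)(1−ε)). -/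
/-- Algebraic core of Theorem 1 (profitability of the selfish mining strategy
`π^selfish` in an (ε, D=1)-semi-rational environment). -/
theorem stmt_0 (α ε lam R β : ℝ)
    (hα0 : 0 < α) (hα1 : α < 1) (hε0 : 0 ≤ ε) (hε1 : ε < 1)
    (hlam : 0 < lam) (hR : 0 < R)
    (q00 q10 q20 q11 Diff Profit : ℝ)
    (hq00 : q00 = (1 - α) / (1 + α * (1 - α) ^ 2))
    (hq10 : q10 = α * q00)
    (hq20 : q20 = (α ^ 2 / (1 - α)) * q00)
    (hq11 : q11 = α * (1 - α) * q00)
    (hDiff : Diff = (1 - α) * q00 + α * q20 + 2 * (1 - α) * q20 + 2 * q11)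
    (hProfit : Profit =
      (α * q20 + 2 * (1 - α) * q20 + 2 * α * q11 + (1 - ε) * (1 - α - β) * q11) *
        (lam * R / Diff)) :
    Profit > α * lam * R ↔ β < (α - ε * (1 - α) ^ 2) / ((1 - α) * (1 - ε)) := by
  have h1 : (0:ℝ) < 1 - α := by linarith
  have h2 : (0:ℝ) < 1 - ε := by linarith
  have hD0 : (0:ℝ) < 1 + α * (1 - α) ^ 2 := by positivity
  have hq00pos : 0 < q00 := by rw [hq00]; positivity
  have hq20pos : 0 < q20 := by rw [hq20]; positivity
  have hq11pos : 0 < q11 := by rw [hq11]; positivity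
  have hDiffpos : 0 < Diff := by
    have h3 : 0 < (1 - α) * q00 := mul_pos h1 hq00pos
    have h4 : 0 < α * q20 := mul_pos hα0 hq20pos
    have h5 : 0 < 2 * (1 - α) * q20 := by positivity
    linarith [hDiff]
  have hc : Profit - α * lam * R =
      (lam * R * q00 * α / Diff) *
        ((α - ε * (1 - α) ^ 2) - β * ((1 - α) * (1 - ε))) := by
    subst hProfit hDiff hq20 hq11 hq00
    field_simp
    ring
  have hcpos : 0 < lam * R * q00 * α / Diff := by positivity
  constructor
  · intro h
    have h0 : 0 < (lam * R * q00 * α / Diff) *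
        ((α - ε * (1 - α) ^ 2) - β * ((1 - α) * (1 - ε))) := by
      rw [← hc]; linarith
    have h0' : 0 < (α - ε * (1 - α) ^ 2) - β * ((1 - α) * (1 - ε)) :=
      (mul_pos_iff.mp h0).elim (fun ⟨_, h⟩ => h)
        (fun ⟨h, _⟩ => absurd hcpos (not_lt.mpr h.le))
    rw [lt_div_iff₀ (by positivity)]
    linarith
  · intro h
    rw [lt_div_iff₀ (by positivity)] at h
    have h0' : 0 < (α - ε * (1 - α) ^ 2) - β * ((1 - α) * (1 - ε)) := by linarith
    nlinarith [mul_pos hcpos h0']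
end

section
/- Let 0 < α₁ < 1, 0 ≤ ε < 1, and let α : I → ℝ be a finite family of nonnegative real numbers with Σᵢ αᵢ = 1 − α₁ and αᵢ ≤ α₂ for every i ∈ I, where α₂ ≥ 0. If α₁/(1−α₁) > α₂ + ε(1 − α₁ − α₂), then β₁ := (Σᵢ αᵢ²)/(1−α₁) < (α₁ − ε(1−α₁)²)/((1−α₁)(1−ε)). -/
/-- Corollary 1, first part: if `α₁/(1−α₁) > α₂ + ε(1−α₁−α₂)`, then the residual
centralization factor of the largest pool is below the selfish-mining advantage. -/
theorem stmt_3 {I : Type*} [Fintype I] (α₁ α₂ ε : ℝ) (α : I → ℝ)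
    (hα₁0 : 0 < α₁) (hα₁1 : α₁ < 1) (hε0 : 0 ≤ ε) (hε1 : ε < 1)
    (hnn : ∀ i, 0 ≤ α i) (hsum : ∑ i, α i = 1 - α₁)
    (hub : ∀ i, α i ≤ α₂) (hα₂ : 0 ≤ α₂)
    (hcond : α₁ / (1 - α₁) > α₂ + ε * (1 - α₁ - α₂)) :
    (∑ i, (α i) ^ 2) / (1 - α₁) < (α₁ - ε * (1 - α₁) ^ 2) / ((1 - α₁) * (1 - ε)) := by
  have h1 : (0:ℝ) < 1 - α₁ := by linarith
  have hε : (0:ℝ) < 1 - ε := by linarith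
  have hkey : ∑ i, (α i) ^ 2 ≤ α₂ * (1 - α₁) := by
    calc ∑ i, (α i) ^ 2 ≤ ∑ i, α₂ * α i := by
          apply Finset.sum_le_sum
          intro i _
          have := hub i
          have := hnn i
          nlinarith
      _ = α₂ * (1 - α₁) := by rw [← Finset.mul_sum, hsum]
  have h2 : (∑ i, (α i) ^ 2) / (1 - α₁) ≤ α₂ := by
    rw [div_le_iff₀ h1]; linarith
  have h3 : α₂ < (α₁ - ε * (1 - α₁) ^ 2) / ((1 - α₁) * (1 - ε)) := by
    rw [lt_div_iff₀ (by positivity)]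
    have hc : (α₂ + ε * (1 - α₁ - α₂)) * (1 - α₁) < α₁ := (lt_div_iff₀ h1).mp hcond
    nlinarith
  linarith
end

section
/- Let λ > 0, R > 0, L > 0, k > 0 be real numbers, let 0 ≤ α_i < 1, ε ≥ 0, and let 0 < α_A ≤ 1 satisfy α_A > α_i/(1−α_i) + ε·(1/(1−α_i) + 1). Set br = (α_i+ε)/(1−α_i) + ε. Then λ·(α_A·(L+k)·R − k·br·R)/L > λ·α_A·R. -/
/-- Theorem 5: profitability of the whale-transaction-based bribery attack. -/
theorem stmt_8 (lam R L k αi ε αA : ℝ)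
    (hlam : 0 < lam) (hR : 0 < R) (hL : 0 < L) (hk : 0 < k)
    (hi0 : 0 ≤ αi) (hi1 : αi < 1) (hε : 0 ≤ ε)
    (hA0 : 0 < αA) (hA1 : αA ≤ 1)
    (hcond : αA > αi / (1 - αi) + ε * (1 / (1 - αi) + 1)) :
    lam * (αA * (L + k) * R - k * ((αi + ε) / (1 - αi) + ε) * R) / L >
      lam * αA * R := by
  have hd : (0:ℝ) < 1 - αi := by linarith
  have hbr : (αi + ε) / (1 - αi) + ε < αA := by
    have : αi / (1 - αi) + ε * (1 / (1 - αi) + 1) = (αi + ε) / (1 - αi) + ε := by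
      field_simp; ring
    linarith [hcond, this ▸ hcond]
  rw [gt_iff_lt, lt_div_iff₀ hL]
  have h2 : k * ((αi + ε) / (1 - αi) + ε) < k * αA := by
    exact mul_lt_mul_of_pos_left hbr hk
  nlinarith [mul_pos hlam hR]
end

section
/- Let λ > 0, R > 0, L > 0, k > 0 be real numbers, let α_i ≥ 0, ε ≥ 0, and let α_A satisfy α_A > α_i + 2ε. Then λ·(α_A·(L+k)·R − k·(α_i+2ε)·R)/L > λ·α_A·R. -/
/-- Theorem 3: profitability of the smart-contract-based bribery attack in an
ε-semi-rational environment. -/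
theorem stmt_10 (lam R L k αi ε αA : ℝ)
    (hlam : 0 < lam) (hR : 0 < R) (hL : 0 < L) (hk : 0 < k)
    (hi : 0 ≤ αi) (hε : 0 ≤ ε) (hcond : αA > αi + 2 * ε) :
    lam * (αA * (L + k) * R - k * (αi + 2 * ε) * R) / L > lam * αA * R := by
  rw [gt_iff_lt, lt_div_iff₀ hL]
  nlinarith [mul_pos hlam hR, mul_pos hk (sub_pos.mpr hcond)]
end

section
/- Let α : I → ℝ be a finite family of nonnegative real numbers with Σᵢ αᵢ = 1, let j ∈ I with 0 < α_j < 1, and set β_j := (Σ_{i ≠ j} αᵢ²)/(1−α_j). Then: (i) p_success := (Σ_{i ≠ j} αᵢ·(1−αᵢ))/(1−α_j) = 1 − β_j; and (ii) for all real R > 0, ε ≥ 0, br₁ ≥ 0, the inequality α_j·p_success·(1+br₁)·R + α_j·(1−p_success)·br₁·R ≥ α_j·R + ε·α_j·R holds if and only if br₁ ≥ β_j + ε. -/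
/-- Lemma on the smart-contract-based bribery attack in the unknown-miner
setting: the success probability equals `1 − β_j`, and the incentive condition
holds iff `br₁ ≥ β_j + ε`. -/
theorem stmt_11 {I : Type*} [Fintype I] [DecidableEq I] (α : I → ℝ)
    (hnn : ∀ i, 0 ≤ α i) (hsum : ∑ i, α i = 1)
    (j : I) (hj0 : 0 < α j) (hj1 : α j < 1) :
    (∑ i ∈ Finset.univ.erase j, α i * (1 - α i)) / (1 - α j) =
      1 - (∑ i ∈ Finset.univ.erase j, (α i) ^ 2) / (1 - α j) ∧
    ∀ R ε br₁ : ℝ, 0 < R → 0 ≤ ε → 0 ≤ br₁ →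
      (α j * ((∑ i ∈ Finset.univ.erase j, α i * (1 - α i)) / (1 - α j)) *
          (1 + br₁) * R +
        α j * (1 - (∑ i ∈ Finset.univ.erase j, α i * (1 - α i)) / (1 - α j)) *
          br₁ * R ≥ α j * R + ε * α j * R ↔
        br₁ ≥ (∑ i ∈ Finset.univ.erase j, (α i) ^ 2) / (1 - α j) + ε) := by
  have hne : (1 : ℝ) - α j ≠ 0 := by linarith
  have hrest : ∑ i ∈ Finset.univ.erase j, α i = 1 - α j := by
    have := Finset.add_sum_erase Finset.univ α (Finset.mem_univ j)
    rw [hsum] at this; linarith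
  have hP : (∑ i ∈ Finset.univ.erase j, α i * (1 - α i)) =
      (1 - α j) - ∑ i ∈ Finset.univ.erase j, (α i) ^ 2 := by
    rw [← hrest, ← Finset.sum_sub_distrib]
    exact Finset.sum_congr rfl (fun i _ => by ring)
  have h1 : (∑ i ∈ Finset.univ.erase j, α i * (1 - α i)) / (1 - α j) =
      1 - (∑ i ∈ Finset.univ.erase j, (α i) ^ 2) / (1 - α j) := by
    rw [hP]; field_simp
  refine ⟨h1, fun R ε br₁ hR hε hbr => ?_⟩
  rw [h1]
  set β := (∑ i ∈ Finset.univ.erase j, (α i) ^ 2) / (1 - α j) with hβ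
  have key : α j * (1 - β) * (1 + br₁) * R + α j * (1 - (1 - β)) * br₁ * R
      - (α j * R + ε * α j * R) = α j * R * (br₁ - (β + ε)) := by ring
  constructor <;> intro h <;> nlinarith [mul_pos hj0 hR]
end

section
/- Let d ≥ 1 be an integer and let 0 < α < 1/2. For each natural number s, let G(d,s) denote the number of monotone lattice paths from (0,0) to (s, s+d) using unit right and unit up steps such that no point of the path other than the final endpoint lies on the line y = x − 2 or on the line y = x + d. Then Σ'_{s=0}^{∞} G(d,s)·(α(1−α))^s = (1−2α)/((1−α)^{d+2} − α^{d+2}). -/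
/-- Number of right steps among the first `k` steps of a step sequence
(`true` = unit right step, `false` = unit up step). -/
def rightsBefore {n : ℕ} (f : Fin n → Bool) (k : ℕ) : ℕ :=
  (Finset.univ.filter fun j : Fin n => j.val < k ∧ f j = true).card

/-- Number of up steps among the first `k` steps of a step sequence. -/
def upsBefore {n : ℕ} (f : Fin n → Bool) (k : ℕ) : ℕ :=
  (Finset.univ.filter fun j : Fin n => j.val < k ∧ f j = false).card

lemma rightsBefore_zero {n : ℕ} (f : Fin n → Bool) : rightsBefore f 0 = 0 := by
  simp [rightsBefore]

lemma upsBefore_zero {n : ℕ} (f : Fin n → Bool) : upsBefore f 0 = 0 := by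
  simp [upsBefore]

lemma rightsBefore_cons {n : ℕ} (b : Bool) (f : Fin n → Bool) (k : ℕ) :
    rightsBefore (Fin.cons b f) (k + 1) = (if b = true then 1 else 0) + rightsBefore f k := by
  classical
  simp only [rightsBefore, Finset.card_filter]
  rw [Fin.sum_univ_succ]
  simp [Nat.succ_lt_succ_iff]

lemma upsBefore_cons {n : ℕ} (b : Bool) (f : Fin n → Bool) (k : ℕ) :
    upsBefore (Fin.cons b f) (k + 1) = (if b = false then 1 else 0) + upsBefore f k := by
  classical
  simp only [upsBefore, Finset.card_filter]
  rw [Fin.sum_univ_succ]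
  simp [Nat.succ_lt_succ_iff]

lemma card_val_lt {n k : ℕ} (hk : k ≤ n) :
    (Finset.univ.filter fun j : Fin n => j.val < k).card = k := by
  classical
  rcases eq_or_lt_of_le hk with h | h
  · subst h
    simp [Finset.filter_true_of_mem, Fin.is_lt]
  · have : (Finset.univ.filter fun j : Fin n => j.val < k) = Finset.Iio ⟨k, h⟩ := by
      ext j
      simp [Finset.mem_Iio, Fin.lt_def]
    rw [this, Fin.card_Iio]

lemma ups_add_rights {n : ℕ} (f : Fin n → Bool) (k : ℕ) (hk : k ≤ n) :
    upsBefore f k + rightsBefore f k = k := by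
  classical
  have h := Finset.card_filter_add_card_filter_not
    (s := Finset.univ.filter fun j : Fin n => j.val < k) (p := fun j => f j = false)
  simp only [Finset.filter_filter] at h
  rw [card_val_lt hk] at h
  simp only [Bool.not_eq_false] at h
  exact h

/-- first-passage predicate: walk starts at height `p`, stays strictly between
`0` and `d+2`, and ends exactly at `d+2` after `n` steps. -/
def pathPred (d p n : ℕ) (f : Fin n → Bool) : Prop :=
  rightsBefore f n + (d + 2) = upsBefore f n + p ∧
  ∀ k < n, upsBefore f k + p ≠ rightsBefore f k + (d + 2) ∧
    rightsBefore f k ≠ upsBefore f k + p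

noncomputable def pathN (d p n : ℕ) : ℕ := Nat.card {f : Fin n → Bool // pathPred d p n f}

lemma pathPred_cons_true {d q n : ℕ} (hq : q ≤ d) (f : Fin n → Bool) :
    pathPred d (q + 1) (n + 1) (Fin.cons true f) ↔ pathPred d q n f := by
  constructor
  · rintro ⟨h1, h2⟩
    rw [rightsBefore_cons, upsBefore_cons] at h1
    simp at h1
    refine ⟨by omega, fun k hk => ?_⟩
    have := h2 (k + 1) (by omega)
    rw [rightsBefore_cons, upsBefore_cons] at this
    simp at this
    omega
  · rintro ⟨h1, h2⟩
    constructor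
    · rw [rightsBefore_cons, upsBefore_cons]
      simp
      omega
    · intro k hk
      match k with
      | 0 => simp only [rightsBefore_zero, upsBefore_zero]; omega
      | (j + 1) =>
        rw [rightsBefore_cons, upsBefore_cons]
        simp only [reduceIte]
        have h3 := h2 j (by omega)
        simp
        omega

lemma pathPred_cons_false {d q n : ℕ} (hq : q ≤ d) (f : Fin n → Bool) :
    pathPred d (q + 1) (n + 1) (Fin.cons false f) ↔ pathPred d (q + 2) n f := by
  constructor
  · rintro ⟨h1, h2⟩
    rw [rightsBefore_cons, upsBefore_cons] at h1
    simp at h1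
    refine ⟨by omega, fun k hk => ?_⟩
    have := h2 (k + 1) (by omega)
    rw [rightsBefore_cons, upsBefore_cons] at this
    simp at this
    omega
  · rintro ⟨h1, h2⟩
    constructor
    · rw [rightsBefore_cons, upsBefore_cons]
      simp
      omega
    · intro k hk
      match k with
      | 0 => simp only [rightsBefore_zero, upsBefore_zero]; omega
      | (j + 1) =>
        rw [rightsBefore_cons, upsBefore_cons]
        simp only [reduceIte]
        have h3 := h2 j (by omega)
        simp
        omega

lemma cons_self {n : ℕ} (f : Fin (n + 1) → Bool) (b : Bool) (h : f 0 = b) :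
    Fin.cons b (Fin.tail f) = f := by subst h; exact Fin.cons_self_tail f

lemma pathN_rec {d q n : ℕ} (hq : q ≤ d) :
    pathN d (q + 1) (n + 1) = pathN d (q + 2) n + pathN d q n := by
  classical
  rw [pathN, pathN, pathN, ← Nat.card_sum]
  apply Nat.card_congr
  refine
    { toFun := fun x => if h : x.1 0 = true
        then Sum.inr ⟨Fin.tail x.1, ?_⟩
        else Sum.inl ⟨Fin.tail x.1, ?_⟩
      invFun := fun y => Sum.elim
        (fun g => ⟨Fin.cons false g.1, (pathPred_cons_false hq g.1).2 g.2⟩)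
        (fun g => ⟨Fin.cons true g.1, (pathPred_cons_true hq g.1).2 g.2⟩) y
      left_inv := ?_
      right_inv := ?_ }
  · rw [← pathPred_cons_true hq]
    rw [cons_self x.1 true h]
    exact x.2
  · have h' : x.1 0 = false := by simpa using h
    rw [← pathPred_cons_false hq]
    rw [cons_self x.1 false h']
    exact x.2
  · rintro ⟨f, hf⟩
    by_cases h : f 0 = true
    · simp only [h, reduceDIte, Sum.elim_inr]
      exact Subtype.ext (cons_self f true h)
    · have h' : f 0 = false := by simpa using h
      simp only [h, reduceDIte, Sum.elim_inl]
      exact Subtype.ext (cons_self f false h')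
  · rintro (⟨g, hg⟩ | ⟨g, hg⟩) <;> simp [Fin.tail_cons]

lemma pathN_zero_left {d n : ℕ} : pathN d 0 n = 0 := by
  rw [pathN, Nat.card_eq_zero]
  left
  constructor
  rintro ⟨f, h1, h2⟩
  match n with
  | 0 =>
    rw [rightsBefore_zero, upsBefore_zero] at h1
    omega
  | (m + 1) =>
    have := h2 0 (by omega)
    rw [rightsBefore_zero, upsBefore_zero] at this
    omega

lemma pathN_top_zero {d : ℕ} : pathN d (d + 2) 0 = 1 := by
  rw [pathN]
  have : Unique {f : Fin 0 → Bool // pathPred d (d + 2) 0 f} := by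
    refine ⟨⟨⟨fun i => i.elim0, ?_, ?_⟩⟩, ?_⟩
    · rw [rightsBefore_zero, upsBefore_zero]
    · intro k hk; omega
    · rintro ⟨f, hf⟩
      apply Subtype.ext
      funext i
      exact i.elim0
  rw [Nat.card_unique]

lemma pathN_top_succ {d n : ℕ} : pathN d (d + 2) (n + 1) = 0 := by
  rw [pathN, Nat.card_eq_zero]
  left
  constructor
  rintro ⟨f, h1, h2⟩
  have := h2 0 (by omega)
  rw [rightsBefore_zero, upsBefore_zero] at this
  omega

lemma pathN_short {d p n : ℕ} (h : n + p < d + 2) : pathN d p n = 0 := by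
  rw [pathN, Nat.card_eq_zero]
  left
  constructor
  rintro ⟨f, h1, h2⟩
  have hs := ups_add_rights f n le_rfl
  omega

lemma pathN_le {d p n : ℕ} : pathN d p n ≤ 2 ^ n := by
  have h1 : pathN d p n ≤ Nat.card (Fin n → Bool) :=
    Nat.card_le_card_of_injective _ Subtype.val_injective
  simpa using h1

section GenFun

variable {x : ℝ} (hx0 : 0 ≤ x) (hx4 : 4 * x < 1)

include hx0 hx4 in
lemma summable_pathN (d p c : ℕ) :
    Summable (fun s : ℕ => (pathN d p (2 * s + c) : ℝ) * x ^ s) := by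
  have hgeo : Summable (fun s : ℕ => (2 : ℝ) ^ c * (4 * x) ^ s) :=
    (summable_geometric_of_lt_one (by linarith) hx4).mul_left _
  refine Summable.of_nonneg_of_le
    (fun s => mul_nonneg (Nat.cast_nonneg _) (pow_nonneg hx0 s)) (fun s => ?_) hgeo
  have hb : (pathN d p (2 * s + c) : ℝ) ≤ 2 ^ (2 * s + c) := by
    have := pathN_le (d := d) (p := p) (n := 2 * s + c)
    calc (pathN d p (2 * s + c) : ℝ) ≤ ((2 ^ (2 * s + c) : ℕ) : ℝ) := Nat.cast_le.mpr this
      _ = 2 ^ (2 * s + c) := by push_cast; ring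
  calc (pathN d p (2 * s + c) : ℝ) * x ^ s ≤ 2 ^ (2 * s + c) * x ^ s :=
        mul_le_mul_of_nonneg_right hb (pow_nonneg hx0 s)
    _ = 2 ^ c * (4 * x) ^ s := by rw [pow_add, mul_pow, pow_mul]; ring

noncomputable def genA (x : ℝ) (d p : ℕ) : ℝ :=
  ∑' s : ℕ, (pathN d p (2 * s + (d + 2 - p)) : ℝ) * x ^ s

include hx0 hx4 in
lemma genA_zero (d : ℕ) : genA x d 0 = 0 := by
  unfold genA
  simp [pathN_zero_left]

include hx0 hx4 in
lemma genA_top (d : ℕ) : genA x d (d + 2) = 1 := by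
  unfold genA
  rw [Summable.tsum_eq_zero_add (summable_pathN hx0 hx4 d (d + 2) _)]
  have h0 : (2 * 0 + (d + 2 - (d + 2))) = 0 := by omega
  rw [h0]
  have hs : ∀ s : ℕ, (pathN d (d + 2) (2 * (s + 1) + (d + 2 - (d + 2))) : ℝ) * x ^ (s + 1) = 0 := by
    intro s
    have : 2 * (s + 1) + (d + 2 - (d + 2)) = (2 * s + 1) + 1 := by omega
    rw [this, pathN_top_succ]
    simp
  rw [tsum_congr hs]
  simp [pathN_top_zero]

include hx0 hx4 in
lemma genA_rec (d q : ℕ) (hq : q ≤ d) :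
    genA x d (q + 1) = genA x d (q + 2) + x * genA x d q := by
  have e1 : ∀ s : ℕ, 2 * s + (d + 2 - (q + 1)) = (2 * s + (d - q)) + 1 := fun s => by omega
  have e2 : ∀ s : ℕ, 2 * s + (d + 2 - (q + 2)) = 2 * s + (d - q) := fun s => by omega
  unfold genA
  have hsplit : ∀ s : ℕ,
      (pathN d (q + 1) (2 * s + (d + 2 - (q + 1))) : ℝ) * x ^ s =
        (pathN d (q + 2) (2 * s + (d + 2 - (q + 2))) : ℝ) * x ^ s +
        (pathN d q (2 * s + (d - q)) : ℝ) * x ^ s := by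
    intro s
    rw [e1 s, e2 s, pathN_rec hq]
    push_cast
    ring
  rw [tsum_congr hsplit]
  have hsum1 : Summable (fun s : ℕ => (pathN d (q + 2) (2 * s + (d + 2 - (q + 2))) : ℝ) * x ^ s) :=
    summable_pathN hx0 hx4 d (q + 2) _
  have hsum2 : Summable (fun s : ℕ => (pathN d q (2 * s + (d - q)) : ℝ) * x ^ s) :=
    summable_pathN hx0 hx4 d q _
  rw [Summable.tsum_add hsum1 hsum2]
  congr 1
  rw [Summable.tsum_eq_zero_add hsum2]
  have h0 : (pathN d q (2 * 0 + (d - q)) : ℝ) * x ^ 0 = 0 := by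
    rw [pathN_short (by omega)]
    simp
  rw [h0, zero_add]
  have hshift : ∀ s : ℕ,
      (pathN d q (2 * (s + 1) + (d - q)) : ℝ) * x ^ (s + 1) =
        x * ((pathN d q (2 * s + (d + 2 - q)) : ℝ) * x ^ s) := by
    intro s
    have : 2 * (s + 1) + (d - q) = 2 * s + (d + 2 - q) := by omega
    rw [this]
    ring
  rw [tsum_congr hshift]
  exact tsum_mul_left

end GenFun

lemma latticeG_eq_pathN (d s : ℕ) :
    (Nat.card {f : Fin (2 * s + d) → Bool //
      rightsBefore f (2 * s + d) = s ∧
      ∀ k < 2 * s + d,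
        upsBefore f k ≠ rightsBefore f k + d ∧
        rightsBefore f k ≠ upsBefore f k + 2}) = pathN d 2 (2 * s + d) := by
  rw [pathN]
  apply Nat.card_congr
  apply Equiv.subtypeEquivRight
  intro f
  have hsum : upsBefore f (2 * s + d) + rightsBefore f (2 * s + d) = 2 * s + d :=
    ups_add_rights f _ le_rfl
  constructor
  · rintro ⟨h1, h2⟩
    refine ⟨by omega, fun k hk => ?_⟩
    have := h2 k hk
    omega
  · rintro ⟨h1, h2⟩
    refine ⟨by omega, fun k hk => ?_⟩
    have := h2 k hk
    omega

noncomputable def wseq (x : ℝ) : ℕ → ℝ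
  | 0 => 0
  | 1 => 1
  | (p + 2) => wseq x (p + 1) - x * wseq x p

lemma wseq_spec (α : ℝ) : ∀ p : ℕ,
    wseq (α * (1 - α)) p * (1 - 2 * α) = (1 - α) ^ p - α ^ p := by
  have key : ∀ p : ℕ,
      wseq (α * (1 - α)) p * (1 - 2 * α) = (1 - α) ^ p - α ^ p ∧
      wseq (α * (1 - α)) (p + 1) * (1 - 2 * α) = (1 - α) ^ (p + 1) - α ^ (p + 1) := by
    intro p
    induction p with
    | zero => exact ⟨by simp [wseq], by simp [wseq]; ring⟩
    | succ n ih =>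
      refine ⟨ih.2, ?_⟩
      calc wseq (α * (1 - α)) (n + 2) * (1 - 2 * α)
          = wseq (α * (1 - α)) (n + 1) * (1 - 2 * α)
            - (α * (1 - α)) * (wseq (α * (1 - α)) n * (1 - 2 * α)) := by
            rw [show wseq (α * (1 - α)) (n + 2)
              = wseq (α * (1 - α)) (n + 1) - (α * (1 - α)) * wseq (α * (1 - α)) n from rfl]
            ring
        _ = ((1 - α) ^ (n + 1) - α ^ (n + 1)) - (α * (1 - α)) * ((1 - α) ^ n - α ^ n) := by
            rw [ih.1, ih.2]
        _ = (1 - α) ^ (n + 2) - α ^ (n + 2) := by ring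
  exact fun p => (key p).1

/-- `G d s`: the number of monotone lattice paths from `(0,0)` to `(s, s+d)`
using unit right and unit up steps such that no point of the path other than
the final endpoint lies on the line `y = x − 2` or on the line `y = x + d`. -/
noncomputable def latticeG (d s : ℕ) : ℕ :=
  Nat.card {f : Fin (2 * s + d) → Bool //
    rightsBefore f (2 * s + d) = s ∧
    ∀ k < 2 * s + d,
      upsBefore f k ≠ rightsBefore f k + d ∧
      rightsBefore f k ≠ upsBefore f k + 2}

/-- Lemma 4, first identity. -/
theorem stmt_16 (d : ℕ) (hd : 1 ≤ d) (α : ℝ) (hα0 : 0 < α) (hα1 : α < 1 / 2) :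
    ∑' s : ℕ, (latticeG d s : ℝ) * (α * (1 - α)) ^ s =
      (1 - 2 * α) / ((1 - α) ^ (d + 2) - α ^ (d + 2)) := by
  set x : ℝ := α * (1 - α) with hxdef
  have hα2 : α < 1 - α := by linarith
  have hx0 : (0 : ℝ) ≤ x := by nlinarith
  have hx4 : 4 * x < 1 := by nlinarith [sq_nonneg (1 - 2 * α)]
  -- main linear-recurrence solution
  have main : ∀ p : ℕ, p + 1 ≤ d + 2 →
      genA x d p = genA x d 1 * wseq x p ∧
      genA x d (p + 1) = genA x d 1 * wseq x (p + 1) := by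
    intro p
    induction p with
    | zero =>
      intro _
      constructor
      · rw [genA_zero hx0 hx4, show wseq x 0 = 0 from rfl]; ring
      · rw [show wseq x 1 = 1 from rfl]; ring
    | succ n ih =>
      intro hn
      have ihh := ih (by omega)
      refine ⟨ihh.2, ?_⟩
      have hrec := genA_rec hx0 hx4 d n (by omega)
      have : genA x d (n + 2) = genA x d (n + 1) - x * genA x d n := by linarith
      rw [this, ihh.1, ihh.2,
        show wseq x (n + 2) = wseq x (n + 1) - x * wseq x n from rfl]
      ring
  have h2 := (main 1 (by omega)).2
  have h1w : wseq x 2 = 1 := by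
    rw [show wseq x 2 = wseq x 1 - x * wseq x 0 from rfl,
      show wseq x 1 = 1 from rfl, show wseq x 0 = 0 from rfl]
    ring
  have hA2 : genA x d 2 = genA x d 1 := by rw [h2, h1w, mul_one]
  have hd2 := (main (d + 1) (by omega)).2
  rw [show d + 1 + 1 = d + 2 from rfl, genA_top hx0 hx4] at hd2
  -- denominators
  have hDpos : (0 : ℝ) < (1 - α) ^ (d + 2) - α ^ (d + 2) := by
    have := pow_lt_pow_left₀ hα2 (le_of_lt hα0) (by omega : d + 2 ≠ 0)
    linarith
  have hcpos : (0 : ℝ) < 1 - 2 * α := by linarith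
  have hw : wseq x (d + 2) * (1 - 2 * α) = (1 - α) ^ (d + 2) - α ^ (d + 2) :=
    wseq_spec α (d + 2)
  -- conclude value of genA x d 2
  have hval : genA x d 2 = (1 - 2 * α) / ((1 - α) ^ (d + 2) - α ^ (d + 2)) := by
    rw [hA2]
    rw [eq_div_iff (ne_of_gt hDpos)]
    calc genA x d 1 * ((1 - α) ^ (d + 2) - α ^ (d + 2))
        = (genA x d 1 * wseq x (d + 2)) * (1 - 2 * α) := by rw [← hw]; ring
      _ = 1 - 2 * α := by rw [← hd2]; ring
  -- identify the LHS with genA x d 2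
  have hlhs : ∑' s : ℕ, (latticeG d s : ℝ) * x ^ s = genA x d 2 := by
    unfold genA
    simp only [show d + 2 - 2 = d from by omega]
    apply tsum_congr
    intro s
    rw [latticeG, latticeG_eq_pathN]
  rw [hlhs, hval]
end

section
/- Let d ≥ 1 be an integer and let 0 < α < 1/2. For each natural number s, let G(d,s) denote the number of monotone lattice paths from (0,0) to (s, s+d) using unit right and unit up steps such that no point of the path other than the final endpoint lies on the line y = x − 2 or on the line y = x + d. Then Σ'_{s=0}^{∞} s·G(d,s)·(α(1−α))^s = (d+2)·α(1−α)·((1−α)^{d+1} + α^{d+1})/((1−α)^{d+2} − α^{d+2})² − 2α(1−α)/((1−2α)·((1−α)^{d+2} − α^{d+2})). -/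
lemma rightsBefore_succ {n : ℕ} (f : Fin (n+1) → Bool) (k : ℕ) :
    rightsBefore f (k+1) = (if f 0 = true then 1 else 0) + rightsBefore (Fin.tail f) k := by
  unfold rightsBefore
  rw [Finset.card_filter, Finset.card_filter, Fin.sum_univ_succ]
  simp [Fin.tail, Nat.succ_lt_succ_iff]
  rw [Finset.card_filter]
  rfl

lemma upsBefore_succ {n : ℕ} (f : Fin (n+1) → Bool) (k : ℕ) :
    upsBefore f (k+1) = (if f 0 = false then 1 else 0) + upsBefore (Fin.tail f) k := by
  unfold upsBefore
  rw [Finset.card_filter, Finset.card_filter, Fin.sum_univ_succ]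
  simp [Fin.tail, Nat.succ_lt_succ_iff]
  rw [Finset.card_filter]
  rfl

lemma rights_add_ups {n : ℕ} (f : Fin n → Bool) :
    rightsBefore f n + upsBefore f n = n := by
  unfold rightsBefore upsBefore
  have h1 : (Finset.univ.filter fun j : Fin n => j.val < n ∧ f j = true)
      = Finset.univ.filter fun j : Fin n => f j = true := by
    apply Finset.filter_congr; intro j _; simp [j.isLt]
  have h2 : (Finset.univ.filter fun j : Fin n => j.val < n ∧ f j = false)
      = Finset.univ.filter fun j : Fin n => ¬ (f j = true) := by
    apply Finset.filter_congr; intro j _; simp [j.isLt]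
  rw [h1, h2, Finset.card_filter_add_card_filter_not]
  · simp

lemma card_filter_lt (n k : ℕ) (hk : k ≤ n) :
    (Finset.univ.filter fun j : Fin n => j.val < k).card = k := by
  apply Finset.card_eq_of_bijective (fun i h => (⟨i, lt_of_lt_of_le h hk⟩ : Fin n))
  · intro a ha
    simp only [Finset.mem_filter] at ha
    exact ⟨a.val, ha.2, rfl⟩
  · intro i h; simp [h]
  · intro i j hi hj hij
    simpa using congrArg Fin.val hij

lemma upsBefore_false {n : ℕ} (k : ℕ) (hk : k ≤ n) :
    upsBefore (fun _ : Fin n => false) k = k := by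
  unfold upsBefore
  have : (Finset.univ.filter fun j : Fin n => j.val < k ∧ (fun _ : Fin n => false) j = false)
      = Finset.univ.filter fun j : Fin n => j.val < k := by
    apply Finset.filter_congr; intro j _; simp
  rw [this, card_filter_lt n k hk]

lemma rightsBefore_false {n : ℕ} (k : ℕ) :
    rightsBefore (fun _ : Fin n => false) k = 0 := by
  simp [rightsBefore]

lemma all_false_of_rights_zero {n : ℕ} (f : Fin n → Bool) (h : rightsBefore f n = 0) :
    f = fun _ => false := by
  funext i
  by_contra hi
  have hi' : f i = true := by revert hi; cases f i <;> simp
  have : i ∈ Finset.univ.filter fun j : Fin n => j.val < n ∧ f j = true := by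
    simp [hi', i.isLt]
  rw [rightsBefore, Finset.card_eq_zero] at h
  rw [h] at this
  simp at this

/-- Walk condition: start at height `j`, end at `0`, never touch `0` or `m` before the end. -/
def Cnd (m j n : ℕ) (f : Fin n → Bool) : Prop :=
  upsBefore f n = j + rightsBefore f n ∧
  ∀ k < n, j + rightsBefore f k ≠ upsBefore f k ∧
    j + rightsBefore f k ≠ upsBefore f k + m

noncomputable def Wn (m j n : ℕ) : ℕ := Nat.card {f : Fin n → Bool // Cnd m j n f}

lemma card_split {n : ℕ} (P : (Fin (n+1) → Bool) → Prop) (A B : (Fin n → Bool) → Prop)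
    (h : ∀ f, P f ↔ ((f 0 = true ∧ A (Fin.tail f)) ∨ (f 0 = false ∧ B (Fin.tail f)))) :
    Nat.card {f // P f} = Nat.card {g // A g} + Nat.card {g // B g} := by
  rw [← Nat.card_sum]
  apply Nat.card_congr
  refine ⟨fun f => if h0 : f.1 0 = true then Sum.inl ⟨Fin.tail f.1, ?_⟩
      else Sum.inr ⟨Fin.tail f.1, ?_⟩,
    Sum.elim (fun g => ⟨Fin.cons true g.1, ?_⟩) (fun g => ⟨Fin.cons false g.1, ?_⟩),
    ?_, ?_⟩
  · rcases (h f.1).1 f.2 with ⟨_, hA⟩ | ⟨hf, _⟩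
    · exact hA
    · rw [hf] at h0; exact absurd h0 Bool.false_ne_true
  · rcases (h f.1).1 f.2 with ⟨hf, _⟩ | ⟨_, hB⟩
    · exact absurd hf h0
    · exact hB
  · rw [h]; left; simpa using g.2
  · rw [h]; right; simpa using g.2
  · intro f
    by_cases h0 : f.1 0 = true
    · simp only []
      rw [dif_pos h0]
      apply Subtype.ext
      show Fin.cons true (Fin.tail f.1) = f.1
      rw [← h0]; exact Fin.cons_self_tail f.1
    · simp only []
      rw [dif_neg h0]
      apply Subtype.ext
      have hf : f.1 0 = false := by revert h0; cases f.1 0 <;> simp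
      show Fin.cons false (Fin.tail f.1) = f.1
      rw [← hf]; exact Fin.cons_self_tail f.1
  · intro g
    rcases g with g | g
    · simp
    · simp

lemma forall_lt_succ_iff {n : ℕ} (Q : ℕ → Prop) :
    (∀ k < n+1, Q k) ↔ (Q 0 ∧ ∀ k < n, Q (k+1)) := by
  constructor
  · intro h; exact ⟨h 0 (Nat.succ_pos n), fun k hk => h (k+1) (by omega)⟩
  · rintro ⟨h0, h⟩ k hk
    cases k with
    | zero => exact h0
    | succ k => exact h k (by omega)

lemma cnd_iff (m j n : ℕ) (hj : j + 1 < m) (f : Fin (n+1) → Bool) :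
    Cnd m (j+1) (n+1) f ↔
      ((f 0 = true ∧ Cnd m (j+2) n (Fin.tail f)) ∨
       (f 0 = false ∧ Cnd m j n (Fin.tail f))) := by
  unfold Cnd
  rw [forall_lt_succ_iff]
  cases hb : f 0
  · simp only [hb, Bool.false_eq_true, false_and, false_or, true_and,
      rightsBefore_succ, upsBefore_succ, if_neg, if_pos, Bool.true_eq_false, not_false_iff]
    constructor
    · rintro ⟨he, h0, hi⟩
      refine ⟨by omega, fun k hk => ?_⟩
      have := hi k hk
      omega
    · rintro ⟨he, hi⟩
      refine ⟨by omega, ⟨?_, ?_⟩, fun k hk => ?_⟩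
      · rw [rightsBefore_zero, upsBefore_zero]; omega
      · rw [rightsBefore_zero, upsBefore_zero]; omega
      · have := hi k hk
        omega
  · simp only [hb, Bool.true_eq_false, false_and, or_false, true_and,
      rightsBefore_succ, upsBefore_succ, if_pos, if_neg, Bool.false_eq_true, not_false_iff]
    constructor
    · rintro ⟨he, h0, hi⟩
      refine ⟨by omega, fun k hk => ?_⟩
      have := hi k hk
      omega
    · rintro ⟨he, hi⟩
      refine ⟨by omega, ⟨?_, ?_⟩, fun k hk => ?_⟩
      · rw [rightsBefore_zero, upsBefore_zero]; omega
      · rw [rightsBefore_zero, upsBefore_zero]; omega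
      · have := hi k hk
        omega

lemma Wn_succ (m j n : ℕ) (hj : j + 1 < m) :
    Wn m (j+1) (n+1) = Wn m (j+2) n + Wn m j n :=
  card_split _ _ _ (cnd_iff m j n hj)

lemma Wn_top (m n : ℕ) (hn : 0 < n) : Wn m m n = 0 := by
  have : IsEmpty {f : Fin n → Bool // Cnd m m n f} := by
    refine ⟨fun f => ?_⟩
    have := (f.2.2 0 hn).2
    rw [rightsBefore_zero, upsBefore_zero] at this
    omega
  exact Nat.card_of_isEmpty

lemma Wn_zero_pos (m n : ℕ) (hn : 0 < n) : Wn m 0 n = 0 := by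
  have : IsEmpty {f : Fin n → Bool // Cnd m 0 n f} := by
    refine ⟨fun f => ?_⟩
    have := (f.2.2 0 hn).1
    rw [rightsBefore_zero, upsBefore_zero] at this
    omega
  exact Nat.card_of_isEmpty

lemma Wn_diag (m j : ℕ) (hj : j < m) : Wn m j j = 1 := by
  rw [Wn, Nat.card_eq_one_iff_unique]
  constructor
  · refine ⟨fun f g => ?_⟩
    have hsum := rights_add_ups f.1
    have hf : f.1 = fun _ => false := by
      apply all_false_of_rights_zero
      have := f.2.1
      omega
    have hsum' := rights_add_ups g.1
    have hg : g.1 = fun _ => false := by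
      apply all_false_of_rights_zero
      have := g.2.1
      omega
    exact Subtype.ext (hf.trans hg.symm)
  · refine ⟨⟨fun _ => false, ?_, fun k hk => ?_⟩⟩
    · rw [rightsBefore_false, upsBefore_false j (le_refl j)]
      omega
    · rw [rightsBefore_false, upsBefore_false k (le_of_lt hk)]
      omega

lemma Wn_le (m j n : ℕ) : Wn m j n ≤ 2 ^ n := by
  have h1 : Wn m j n ≤ Nat.card (Fin n → Bool) :=
    Nat.card_le_card_of_injective _ Subtype.val_injective
  simpa [Nat.card_eq_fintype_card] using h1

lemma latticeG_eq_Wn (d s : ℕ) : latticeG d s = Wn (d+2) d (2*s+d) := by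
  apply Nat.card_congr
  apply Equiv.subtypeEquivRight
  intro f
  have hsum := rights_add_ups f
  unfold Cnd
  constructor
  · rintro ⟨he, hi⟩
    refine ⟨by omega, fun k hk => ?_⟩
    have := hi k hk
    omega
  · rintro ⟨he, hi⟩
    refine ⟨by omega, fun k hk => ?_⟩
    have := hi k hk
    omega

lemma Wn_summable (m j : ℕ) (x : ℝ) (hx0 : 0 ≤ x) (hx : x < 1/4) :
    Summable (fun s : ℕ => (Wn m j (2*s+j) : ℝ) * x ^ s) := by
  have hg : Summable (fun s : ℕ => (2:ℝ)^j * (4*x)^s) :=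
    (summable_geometric_of_lt_one (by positivity) (by linarith)).mul_left _
  refine Summable.of_nonneg_of_le (fun s => by positivity) (fun s => ?_) hg
  have h1 : (Wn m j (2*s+j) : ℝ) ≤ (2:ℝ)^(2*s+j) := by
    exact_mod_cast Nat.cast_le.2 (Wn_le m j (2*s+j))
  calc (Wn m j (2*s+j) : ℝ) * x ^ s ≤ (2:ℝ)^(2*s+j) * x^s := by
        apply mul_le_mul_of_nonneg_right h1 (by positivity)
    _ = (2:ℝ)^j * (4*x)^s := by
        rw [pow_add, pow_mul, mul_pow]
        norm_num
        ring

noncomputable def FW (m j : ℕ) (x : ℝ) : ℝ := ∑' s : ℕ, (Wn m j (2*s+j) : ℝ) * x ^ s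

lemma FW_zero (m : ℕ) (hm : 0 < m) (x : ℝ) : FW m 0 x = 1 := by
  rw [FW, tsum_eq_single 0]
  · norm_num [Wn_diag m 0 hm]
  · intro s hs
    rw [Wn_zero_pos m _ (by omega : 0 < 2*s+0)]
    simp

lemma FW_top (m : ℕ) (hm : 0 < m) (x : ℝ) : FW m m x = 0 := by
  rw [FW]
  convert tsum_zero with s
  rw [Wn_top m _ (by omega : 0 < 2*s+m)]
  simp

lemma FW_rec (m j : ℕ) (hj : j + 1 < m) (x : ℝ) (hx0 : 0 < x) (hx : x < 1/4) :
    FW m (j+1) x = x * FW m (j+2) x + FW m j x := by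
  have hs1 := Wn_summable m (j+1) x hx0.le hx
  have hs2 := Wn_summable m (j+2) x hx0.le hx
  have hs0 := Wn_summable m j x hx0.le hx
  have hterm : ∀ t : ℕ, (Wn m (j+1) (2*(t+1)+(j+1)) : ℝ) * x^(t+1)
      = x * ((Wn m (j+2) (2*t+(j+2)) : ℝ) * x^t)
        + (Wn m j (2*(t+1)+j) : ℝ) * x^(t+1) := by
    intro t
    have e1 : 2*(t+1)+(j+1) = (2*t+(j+2)) + 1 := by ring
    have e2 : 2*(t+1)+j = 2*t+(j+2) := by ring
    rw [e1, Wn_succ m j _ hj, ← e2]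
    push_cast
    ring
  have h0 : (Wn m (j+1) (2*0+(j+1)) : ℝ) * x ^ 0 = 1 := by
    norm_num [Wn_diag m (j+1) hj]
  have h0' : (Wn m j (2*0+j) : ℝ) * x ^ 0 = 1 := by
    norm_num [Wn_diag m j (by omega)]
  have hshift : Summable (fun t : ℕ => (Wn m j (2*(t+1)+j) : ℝ) * x^(t+1)) := by
    exact (summable_nat_add_iff 1).mpr hs0
  have hA : FW m (j+1) x
      = 1 + ∑' t : ℕ, (Wn m (j+1) (2*(t+1)+(j+1)) : ℝ) * x^(t+1) := by
    rw [FW, Summable.tsum_eq_zero_add hs1, h0]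
  have hB : FW m j x
      = 1 + ∑' t : ℕ, (Wn m j (2*(t+1)+j) : ℝ) * x^(t+1) := by
    rw [FW, Summable.tsum_eq_zero_add hs0, h0']
  rw [hA, tsum_congr hterm,
    Summable.tsum_add (hs2.mul_left x) hshift, tsum_mul_left, hB, ← FW]
  ring

section closed
variable {α : ℝ}

noncomputable def phiA (α : ℝ) (m j : ℕ) : ℝ :=
  ((1-α)^(m-j) - α^(m-j)) / ((1-α)^m - α^m)

noncomputable def uA (α : ℝ) (j : ℕ) : ℝ :=
  ((1-α)^j - α^j) / ((1-2*α) * (α*(1-α))^(j-1))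

noncomputable def GA (α : ℝ) (m j : ℕ) : ℝ := FW m j (α*(1-α)) - phiA α m j

lemma basic_facts (hα0 : 0 < α) (hα1 : α < 1/2) :
    0 < α*(1-α) ∧ α*(1-α) < 1/4 ∧ (1-2*α) ≠ 0 ∧ ∀ m : ℕ, 0 < m → (1-α)^m - α^m ≠ 0 := by
  refine ⟨by nlinarith, by nlinarith [sq_nonneg (1-2*α)], by intro h; nlinarith, ?_⟩
  intro m hm
  have : α^m < (1-α)^m := pow_lt_pow_left₀ (by linarith) hα0.le (by omega)
  linarith

lemma uA_rec (hα0 : 0 < α) (hα1 : α < 1/2) (i : ℕ) :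
    uA α (i+1) = (α*(1-α)) * uA α (i+2) + uA α i := by
  obtain ⟨hx0, hx4, hc, hD⟩ := basic_facts hα0 hα1
  have hα : α ≠ 0 := hα0.ne'
  have h1α : (1-α) ≠ 0 := by intro h; nlinarith
  cases i with
  | zero =>
    simp only [uA, pow_zero, pow_one]
    field_simp
    ring
  | succ i =>
    simp only [uA, Nat.add_sub_cancel, show i+1+2-1 = i+2 by omega]
    field_simp
    ring

lemma phiA_rec (hα0 : 0 < α) (hα1 : α < 1/2) (m i : ℕ) (hi : i + 2 ≤ m) :
    phiA α m (i+1) = (α*(1-α)) * phiA α m (i+2) + phiA α m i := by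
  obtain ⟨hx0, hx4, hc, hD⟩ := basic_facts hα0 hα1
  have hD0 := hD m (by omega)
  have e0 : m - i = (m - (i+2)) + 2 := by omega
  have e1 : m - (i+1) = (m - (i+2)) + 1 := by omega
  simp only [phiA, e0, e1]
  field_simp
  ring

lemma GA_rec (hα0 : 0 < α) (hα1 : α < 1/2) (m i : ℕ) (hi : i + 2 ≤ m) :
    GA α m (i+1) = (α*(1-α)) * GA α m (i+2) + GA α m i := by
  obtain ⟨hx0, hx4, hc, hD⟩ := basic_facts hα0 hα1
  simp only [GA]
  rw [FW_rec m i (by omega) _ hx0 hx4, phiA_rec hα0 hα1 m i hi]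
  ring

lemma GA_key (hα0 : 0 < α) (hα1 : α < 1/2) (m : ℕ) (hm : 2 ≤ m) :
    ∀ i, i + 1 ≤ m → (GA α m i = GA α m 1 * uA α i ∧
      GA α m (i+1) = GA α m 1 * uA α (i+1)) := by
  obtain ⟨hx0, hx4, hc, hD⟩ := basic_facts hα0 hα1
  intro i
  induction i with
  | zero =>
    intro _
    constructor
    · have hG0 : GA α m 0 = 0 := by
        simp only [GA, phiA, Nat.sub_zero]
        rw [FW_zero m (by omega), div_self (hD m (by omega))]
        ring
      have hu0 : uA α 0 = 0 := by
        simp only [uA, pow_zero]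
        norm_num
      rw [hG0, hu0, mul_zero]
    · have hu1 : uA α 1 = 1 := by
        simp only [uA, pow_one, Nat.sub_self, pow_zero, mul_one]
        rw [show (1-α) - α = 1-2*α by ring, div_self hc]
      rw [hu1, mul_one]
  | succ i ih =>
    intro h
    have prev := ih (by omega)
    refine ⟨prev.2, ?_⟩
    have h1 := GA_rec hα0 hα1 m i (by omega)
    have h2 := uA_rec hα0 hα1 i
    have hmul : (α*(1-α)) * GA α m (i+2) = (α*(1-α)) * (GA α m 1 * uA α (i+2)) := by
      linear_combination -h1 + prev.2 - prev.1 + GA α m 1 * h2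
    exact mul_left_cancel₀ hx0.ne' hmul

lemma FW_closed (hα0 : 0 < α) (hα1 : α < 1/2) (m : ℕ) (hm : 2 ≤ m)
    (j : ℕ) (hj : j + 1 ≤ m) :
    FW m j (α*(1-α)) = ((1-α)^(m-j) - α^(m-j)) / ((1-α)^m - α^m) := by
  obtain ⟨hx0, hx4, hc, hD⟩ := basic_facts hα0 hα1
  have hGm : GA α m m = 0 := by
    simp only [GA, phiA, Nat.sub_self, pow_zero]
    rw [FW_top m (by omega)]
    norm_num
  have hGm' : GA α m m = GA α m 1 * uA α m := by
    have := (GA_key hα0 hα1 m hm (m-1) (by omega)).2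
    rwa [Nat.sub_add_cancel (by omega)] at this
  have hum : uA α m ≠ 0 := by
    apply div_ne_zero (hD m (by omega))
    exact mul_ne_zero hc (pow_ne_zero _ hx0.ne')
  have hG1 : GA α m 1 = 0 := by
    rcases mul_eq_zero.1 (hGm' ▸ hGm) with h | h
    · exact h
    · exact absurd h hum
  have hGj : GA α m j = 0 := by
    rw [(GA_key hα0 hα1 m hm j hj).1, hG1, zero_mul]
  have := sub_eq_zero.1 hGj
  simpa [GA, phiA] using this

lemma first_id (d : ℕ) (hα0 : 0 < α) (hα1 : α < 1/2) :
    ∑' s : ℕ, (latticeG d s : ℝ) * (α*(1-α))^s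
      = (1-2*α) / ((1-α)^(d+2) - α^(d+2)) := by
  obtain ⟨hx0, hx4, hc, hD⟩ := basic_facts hα0 hα1
  have h1 : ∑' s : ℕ, (latticeG d s : ℝ) * (α*(1-α))^s = FW (d+2) d (α*(1-α)) := by
    apply tsum_congr
    intro s
    rw [latticeG_eq_Wn]
  rw [h1, FW_closed hα0 hα1 (d+2) (by omega) d (by omega)]
  have e : d + 2 - d = 2 := by omega
  rw [e]
  have : (1-α)^2 - α^2 = (1-2*α) * 1 := by ring
  rw [this, mul_one]
end closed

/-- Lemma 4, second identity. -/
theorem stmt_17 (d : ℕ) (hd : 1 ≤ d) (α : ℝ) (hα0 : 0 < α) (hα1 : α < 1 / 2) :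
    ∑' s : ℕ, (s : ℝ) * (latticeG d s : ℝ) * (α * (1 - α)) ^ s =
      (d + 2) * (α * (1 - α)) * ((1 - α) ^ (d + 1) + α ^ (d + 1)) /
          ((1 - α) ^ (d + 2) - α ^ (d + 2)) ^ 2 -
        2 * (α * (1 - α)) /
          ((1 - 2 * α) * ((1 - α) ^ (d + 2) - α ^ (d + 2))) := by
  obtain ⟨hx0, hx4, hc, hD⟩ := basic_facts hα0 hα1
  have hD0 := hD (d+2) (by omega)
  set S := Set.Ioo (α/2) ((α + 1/2)/2) with hS
  have hmem : α ∈ S := by constructor <;> [linarith; linarith]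
  have hSsub : ∀ β ∈ S, 0 < β ∧ β < 1/2 := by
    rintro β ⟨h1, h2⟩
    constructor <;> [linarith; linarith]
  set b := (α + 1/2)/2 with hb
  set q := b * (1-b) with hq
  have hb2 : b < 1/2 := by rw [hb]; linarith
  have hb0 : 0 < b := by rw [hb]; linarith
  have hq0 : 0 < q := by rw [hq]; nlinarith
  have h4q : 4*q < 1 := by rw [hq]; nlinarith [sq_nonneg (1-2*b)]
  have hqS : ∀ β ∈ S, β*(1-β) ≤ q := by
    rintro β ⟨h1, h2⟩
    rw [hq]
    nlinarith
  set g : ℕ → ℝ → ℝ := fun s β => (latticeG d s : ℝ) * (β*(1-β))^s with hg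
  set g' : ℕ → ℝ → ℝ :=
    fun s β => (latticeG d s : ℝ) * ((s:ℝ) * (β*(1-β))^(s-1) * (1-2*β)) with hg'
  have hderiv : ∀ (s : ℕ) (β : ℝ), HasDerivAt (g s) (g' s β) β := by
    intro s β
    have hbase : HasDerivAt (fun β : ℝ => β*(1-β)) (1-2*β) β := by
      have h := (hasDerivAt_id β).mul ((hasDerivAt_const β (1:ℝ)).sub (hasDerivAt_id β))
      simp only [id_eq] at h
      exact h.congr_deriv (by simp only [Pi.sub_apply, id_eq]; ring)
    exact (hbase.pow s).const_mul _
  set u : ℕ → ℝ := fun s => (2:ℝ)^d * 4 * ((s:ℝ) * (4*q)^(s-1)) with hu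
  have husum : Summable u := by
    apply Summable.mul_left
    apply (summable_nat_add_iff 1).1
    have h1 : Summable (fun t : ℕ => ((t:ℝ)) * (4*q)^t) := by
      have := summable_pow_mul_geometric_of_norm_lt_one 1
        (r := 4*q) (by rw [Real.norm_eq_abs, abs_of_pos (by positivity)]; linarith)
      simpa using this
    have h2 : Summable (fun t : ℕ => ((4*q):ℝ)^t) :=
      summable_geometric_of_lt_one (by positivity) (by linarith)
    have := h1.add h2
    apply Summable.congr this
    intro t
    push_cast [Nat.add_sub_cancel]
    ring
  have hLle : ∀ s : ℕ, (latticeG d s : ℝ) ≤ (2:ℝ)^(2*s+d) := by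
    intro s
    rw [latticeG_eq_Wn]
    exact_mod_cast Nat.cast_le.2 (Wn_le (d+2) d (2*s+d))
  have hbound : ∀ (s : ℕ) (β : ℝ), β ∈ S → ‖g' s β‖ ≤ u s := by
    intro s β hβ
    obtain ⟨hβ0, hβ1⟩ := hSsub β hβ
    have hy0 : (0:ℝ) ≤ β*(1-β) := by nlinarith
    have hyq : β*(1-β) ≤ q := hqS β hβ
    have habs : |1-2*β| ≤ 1 := by rw [abs_le]; constructor <;> nlinarith
    rw [hg', Real.norm_eq_abs, abs_mul, abs_mul, abs_mul]
    have h1 : |(latticeG d s : ℝ)| = (latticeG d s : ℝ) := abs_of_nonneg (by positivity)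
    have h2 : |(s:ℝ)| = (s:ℝ) := abs_of_nonneg (by positivity)
    have h3 : |(β*(1-β))^(s-1)| ≤ q^(s-1) := by
      rw [abs_of_nonneg (by positivity)]
      exact pow_le_pow_left₀ hy0 hyq _
    calc |(latticeG d s : ℝ)| * (|(s:ℝ)| * |(β*(1-β))^(s-1)| * |1-2*β|)
        ≤ (2:ℝ)^(2*s+d) * ((s:ℝ) * q^(s-1) * 1) := by
          rw [h1, h2]
          apply mul_le_mul (hLle s) ?_ (by positivity) (by positivity)
          apply mul_le_mul ?_ habs (abs_nonneg _) (by positivity)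
          exact mul_le_mul_of_nonneg_left h3 (by positivity)
      _ ≤ u s := by
          rw [hu]
          cases s with
          | zero => simp
          | succ t =>
            have e1 : 2*(t+1)+d = d + 2*(t+1) := by ring
            have e2 : (2:ℝ)^(d + 2*(t+1)) = 2^d * 4^(t+1) := by
              rw [pow_add, pow_mul]
              norm_num
            rw [e1, e2]
            simp only [Nat.add_sub_cancel]
            apply le_of_eq
            rw [show ((4:ℝ)*q)^t = 4^t * q^t from mul_pow 4 q t]
            push_cast
            ring
  have hsum0 : Summable (fun s => g s α) := by
    have he : (fun s => g s α)
        = fun s : ℕ => (Wn (d+2) d (2*s+d) : ℝ) * (α*(1-α))^s := by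
      funext s
      simp only [hg]
      rw [latticeG_eq_Wn]
    rw [he]
    exact Wn_summable _ _ _ hx0.le hx4
  have hmain : HasDerivAt (fun β => ∑' s, g s β) (∑' s, g' s α) α :=
    hasDerivAt_tsum_of_isPreconnected husum isOpen_Ioo isPreconnected_Ioo
      (fun s y _ => hderiv s y) hbound hmem hsum0 hmem
  have hEv : (fun β => ∑' s, g s β)
      =ᶠ[nhds α] (fun β => (1-2*β)/((1-β)^(d+2) - β^(d+2))) := by
    filter_upwards [isOpen_Ioo.mem_nhds hmem] with β hβ
    obtain ⟨hβ0, hβ1⟩ := hSsub β hβ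
    simp only [hg]
    exact first_id d hβ0 hβ1
  have hR : HasDerivAt (fun β : ℝ => (1-2*β)/((1-β)^(d+2) - β^(d+2)))
      (∑' s, g' s α) α := hmain.congr_of_eventuallyEq hEv.symm
  have hnum : HasDerivAt (fun β : ℝ => 1-2*β) (-2 : ℝ) α := by
    have h := ((hasDerivAt_id α).const_mul (2:ℝ)).const_sub (1:ℝ)
    simpa using h
  have hden : HasDerivAt (fun β : ℝ => (1-β)^(d+2) - β^(d+2))
      (-(((d:ℝ)+2) * ((1-α)^(d+1) + α^(d+1)))) α := by
    have h1 : HasDerivAt (fun β : ℝ => (1-β)) (-1 : ℝ) α := by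
      simpa using (hasDerivAt_id α).const_sub (1:ℝ)
    have h2 := h1.pow (d+2)
    have h3 := hasDerivAt_pow (d+2) α
    have h4 := h2.sub h3
    refine h4.congr_deriv ?_
    have e : d + 2 - 1 = d + 1 := by omega
    rw [e]
    push_cast
    ring
  have hRd : HasDerivAt (fun β : ℝ => (1-2*β)/((1-β)^(d+2) - β^(d+2)))
      ((-2 * ((1-α)^(d+2) - α^(d+2))
          - (1-2*α) * (-(((d:ℝ)+2) * ((1-α)^(d+1) + α^(d+1)))))
        / ((1-α)^(d+2) - α^(d+2))^2) α := hnum.div hden hD0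
  have hde : ∑' s, g' s α
      = (-2 * ((1-α)^(d+2) - α^(d+2))
          - (1-2*α) * (-(((d:ℝ)+2) * ((1-α)^(d+1) + α^(d+1)))))
        / ((1-α)^(d+2) - α^(d+2))^2 := hR.unique hRd
  have hfin : ∑' s : ℕ, (s:ℝ) * (latticeG d s : ℝ) * (α*(1-α))^s
      = (α*(1-α))/(1-2*α) * ∑' s, g' s α := by
    rw [← tsum_mul_left]
    apply tsum_congr
    intro s
    simp only [hg']
    cases s with
    | zero => simp
    | succ t =>
      simp only [Nat.add_sub_cancel]
      push_cast
      field_simp [show (1:ℝ) - α * 2 ≠ 0 by intro h; apply hc; linarith]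
      ring
  rw [hfin, hde]
  field_simp [show (1:ℝ) - α * 2 ≠ 0 by intro h; apply hc; linarith]
  ring
end

section
/- Let b : Fin N → ℝ satisfy 0 ≤ bᵢ < 1 for all i, let α ≥ 0, and set b_tot = Σᵢ bᵢ and β = Σᵢ bᵢ/(1−bᵢ). Define P₀ = (1 − b_tot + α·β)/(1+β), P₁(i) = bᵢ/((1−bᵢ)(1+β)), and P₂(i) = bᵢ·(1−α−bᵢ)/((1−bᵢ)(1+β)). Then: (i) P₀ + Σᵢ (P₁(i) + P₂(i)) = 1; (ii) P₂(i) = (1−α−bᵢ)·P₁(i) for every i; and (iii) P₁(i) = bᵢ·(P₀ + P₁(i) + Σⱼ P₂(j)) for every i. -/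
/-- Stationary-distribution computation in the Markov-chain analysis of the
bribery attack (normalization and balance equations). -/
theorem stmt_19 {N : ℕ} (b : Fin N → ℝ) (α : ℝ)
    (hb : ∀ i, 0 ≤ b i ∧ b i < 1) (hα : 0 ≤ α)
    (btot β : ℝ) (hbtot : btot = ∑ i, b i) (hβ : β = ∑ i, b i / (1 - b i))
    (P₀ : ℝ) (P₁ P₂ : Fin N → ℝ)
    (hP₀ : P₀ = (1 - btot + α * β) / (1 + β))
    (hP₁ : ∀ i, P₁ i = b i / ((1 - b i) * (1 + β)))
    (hP₂ : ∀ i, P₂ i = b i * (1 - α - b i) / ((1 - b i) * (1 + β))) :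
    P₀ + ∑ i, (P₁ i + P₂ i) = 1 ∧
    (∀ i, P₂ i = (1 - α - b i) * P₁ i) ∧
    (∀ i, P₁ i = b i * (P₀ + P₁ i + ∑ j, P₂ j)) := by
  have hb1 : ∀ i, (0:ℝ) < 1 - b i := fun i => by linarith [(hb i).2]
  have hβ0 : 0 ≤ β := by
    rw [hβ]; exact Finset.sum_nonneg fun i _ => div_nonneg (hb i).1 (hb1 i).le
  have h1β : (0:ℝ) < 1 + β := by linarith
  have hsum2 : ∑ j, P₂ j = (btot - α * β) / (1 + β) := by
    have h : ∀ j, P₂ j = (b j - α * (b j / (1 - b j))) / (1 + β) := by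
      intro j
      rw [hP₂]
      have := (hb1 j).ne'
      field_simp
      ring
    rw [Finset.sum_congr rfl fun j _ => h j, ← Finset.sum_div, hbtot, hβ,
      Finset.mul_sum, ← Finset.sum_sub_distrib]
  have hsum1 : ∑ j, P₁ j = β / (1 + β) := by
    have h : ∀ j, P₁ j = (b j / (1 - b j)) / (1 + β) := fun j => by
      rw [hP₁, div_div]
    rw [Finset.sum_congr rfl fun j _ => h j, ← Finset.sum_div, hβ]
  refine ⟨?_, ?_, ?_⟩
  · rw [Finset.sum_add_distrib, hsum1, hsum2, hP₀]
    field_simp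
    ring
  · intro i; rw [hP₁, hP₂]; ring
  · intro i
    rw [hsum2, hP₀, hP₁]
    have := (hb1 i).ne'
    field_simp
    ring
end
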